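/- Let n ≥ 1 and ρ > 0, and for integration by parts let f(t) = t^{ρ/2+n−1} and ψ_ρ(t) = (−1)ⁿ dⁿ/dtⁿ [1/(1+t^ρ)]. Then (1/(n−1)!) ∫₀^∞ t^{ρ/2+n−1} ψ_ρ(t) dt = (π/2) ∏_{k=1}^{n−1} (1 + ρ/(2k)), provided ρ > 1 so that all boundary terms vanish. -/

import Mathlib

open Real MeasureTheory Set Polynomial Filter


noncomputable def Pq (ρ : ℝ) : ℕ → Polynomial ℝ
  | 0 => 1
  | (k+1) => C ρ * X * (derivative (Pq ρ k) * (1 + X) - C ((k:ℝ)+1) * Pq ρ k)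
      - C (k:ℝ) * (Pq ρ k * (1 + X))

lemma Pq_natDegree (ρ : ℝ) : ∀ k, (Pq ρ k).natDegree ≤ k := by
  intro k
  induction k with
  | zero => simp [Pq]
  | succ k ih =>
    have h1 : (1 + X : Polynomial ℝ).natDegree ≤ 1 := by
      apply le_trans (natDegree_add_le _ _); simp
    have hCX : (C ρ * X : Polynomial ℝ).natDegree ≤ 1 := by
      apply le_trans natDegree_mul_le; simp
    have hA : (derivative (Pq ρ k) * (1 + X)).natDegree ≤ k := by
      rcases Nat.eq_zero_or_pos k with rfl | hk
      · have : derivative (Pq ρ 0) = 0 := by simp [Pq]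
        simp [this]
      · have hd : (derivative (Pq ρ k)).natDegree ≤ k - 1 :=
          le_trans (natDegree_derivative_le _) (Nat.sub_le_sub_right ih 1)
        apply le_trans natDegree_mul_le; omega
    have hB : (C ((k:ℝ)+1) * Pq ρ k).natDegree ≤ k := le_trans (natDegree_C_mul_le _ _) ih
    have hC : (Pq ρ k * (1 + X)).natDegree ≤ k + 1 := by
      apply le_trans natDegree_mul_le; omega
    rw [Pq]
    apply le_trans (natDegree_sub_le _ _)
    apply max_le
    · apply le_trans natDegree_mul_le
      have := le_trans (natDegree_sub_le _ _) (max_le hA hB)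
      omega
    · exact le_trans (natDegree_C_mul_le _ _) hC

lemma poly_eval_bound (P : Polynomial ℝ) (k : ℕ) (hk : P.natDegree ≤ k) :
    ∃ M : ℝ, 0 ≤ M ∧ ∀ u : ℝ, 0 ≤ u → |P.eval u| ≤ M * (1+u)^k := by
  refine ⟨∑ i ∈ Finset.range (k+1), |P.coeff i|, Finset.sum_nonneg fun _ _ => abs_nonneg _, ?_⟩
  intro u hu
  have h1u : (1:ℝ) ≤ 1 + u := by linarith
  rw [Polynomial.eval_eq_sum_range' (Nat.lt_succ_of_le hk), Finset.sum_mul]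
  refine le_trans (Finset.abs_sum_le_sum_abs _ _) (Finset.sum_le_sum fun i hi => ?_)
  rw [abs_mul, abs_pow, abs_of_nonneg hu]
  have hik : i ≤ k := by have := Finset.mem_range.mp hi; omega
  have : u ^ i ≤ (1+u)^k := by
    calc u ^ i ≤ (1+u)^i := pow_le_pow_left₀ hu (by linarith) i
    _ ≤ (1+u)^k := pow_le_pow_right₀ h1u hik
  exact mul_le_mul_of_nonneg_left this (abs_nonneg _)

noncomputable def Gf (ρ : ℝ) (k : ℕ) (t : ℝ) : ℝ :=
  (Pq ρ k).eval (t^ρ) / ((1+t^ρ)^(k+1) * t^(k:ℝ))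

lemma Gf_hasDerivAt (ρ : ℝ) (k : ℕ) {t : ℝ} (ht : 0 < t) :
    HasDerivAt (Gf ρ k) (Gf ρ (k+1) t) t := by
  have hu : 0 < t^ρ := rpow_pos_of_pos ht ρ
  have h1u : 0 < 1 + t^ρ := by linarith
  have hru : HasDerivAt (fun x : ℝ => x^ρ) (ρ * t^(ρ-1)) t :=
    Real.hasDerivAt_rpow_const (Or.inl ht.ne')
  have hN : HasDerivAt (fun x : ℝ => (Pq ρ k).eval (x^ρ))
      ((derivative (Pq ρ k)).eval (t^ρ) * (ρ * t^(ρ-1))) t :=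
    by have h := HasDerivAt.comp t ((Pq ρ k).hasDerivAt (t^ρ)) hru; exact h
  have hpow : HasDerivAt (fun x : ℝ => (1+x^ρ)^(k+1))
      ((((k:ℝ)+1) * (1+t^ρ)^k) * (ρ * t^(ρ-1))) t := by
    have := HasDerivAt.comp t (hasDerivAt_pow (k+1) (1+t^ρ)) ((hasDerivAt_const t (1:ℝ)).add hru)
    exact this.congr_deriv (by simp)
  have htk : HasDerivAt (fun x : ℝ => x^(k:ℝ)) ((k:ℝ) * t^((k:ℝ)-1)) t :=
    Real.hasDerivAt_rpow_const (Or.inl ht.ne')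
  have hD := hpow.mul htk
  have hD0 : (1+t^ρ)^(k+1) * t^(k:ℝ) ≠ 0 :=
    mul_ne_zero (pow_ne_zero _ h1u.ne') (rpow_pos_of_pos ht _).ne'
  have h := hN.div hD hD0
  refine (show HasDerivAt (Gf ρ k) _ t from h).congr_deriv ?_
  symm
  simp only [Pi.mul_apply]
  -- now algebraic identity
  have e1 : t^(ρ-1) = t^ρ / t := by rw [Real.rpow_sub ht, Real.rpow_one]
  have e2 : t^((k:ℝ)-1) = t^(k:ℝ) / t := by rw [Real.rpow_sub ht, Real.rpow_one]
  have e3 : t^(((k+1:ℕ)):ℝ) = t^(k:ℝ) * t := by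
    push_cast
    rw [Real.rpow_add ht, Real.rpow_one]
  show Gf ρ (k+1) t = _
  unfold Gf
  rw [e1, e2, e3]
  simp only [Pq, eval_sub, eval_mul, eval_add, eval_one, eval_C, eval_X, eval_natCast]
  have hw : t^(k:ℝ) ≠ 0 := (rpow_pos_of_pos ht _).ne'
  field_simp
  ring

lemma Gf_eq_iteratedDeriv (ρ : ℝ) (k : ℕ) {t : ℝ} (ht : 0 < t) :
    iteratedDeriv k (fun x : ℝ => 1 / (1 + x ^ ρ)) t = Gf ρ k t := by
  induction k generalizing t with
  | zero =>
    simp only [iteratedDeriv_zero, Gf, Pq, eval_one, Nat.cast_zero, Real.rpow_zero, pow_one,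
      mul_one, one_div, zero_add, pow_one]
  | succ k ih =>
    rw [iteratedDeriv_succ]
    have hev : (iteratedDeriv k (fun x : ℝ => 1 / (1 + x ^ ρ))) =ᶠ[nhds t] Gf ρ k :=
      eventually_of_mem (Ioi_mem_nhds ht) (fun x hx => ih hx)
    rw [hev.deriv_eq, (Gf_hasDerivAt ρ k ht).deriv]

lemma Gf_continuousOn (ρ : ℝ) (k : ℕ) : ContinuousOn (Gf ρ k) (Ioi 0) := by
  intro t ht
  exact ((Gf_hasDerivAt ρ k ht).differentiableAt.continuousAt).continuousWithinAt

lemma Gf_bound (ρ : ℝ) (k : ℕ) :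
    ∃ M : ℝ, 0 ≤ M ∧ ∀ t : ℝ, 0 < t → ∀ c : ℝ,
      |t^(c+k) * Gf ρ k t| ≤ M * (t^c * (1+t^ρ)⁻¹) := by
  obtain ⟨M, hM0, hM⟩ := poly_eval_bound (Pq ρ k) k (Pq_natDegree ρ k)
  refine ⟨M, hM0, fun t ht c => ?_⟩
  have hu : 0 < t^ρ := rpow_pos_of_pos ht ρ
  have h1u : (0:ℝ) < 1 + t^ρ := by linarith
  have htk : (0:ℝ) < t^(k:ℝ) := rpow_pos_of_pos ht _
  have htc : (0:ℝ) < t^c := rpow_pos_of_pos ht _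
  have hsplit : t^(c+(k:ℝ)) = t^c * t^(k:ℝ) := Real.rpow_add ht c k
  rw [abs_mul, Gf, abs_div, abs_of_pos (rpow_pos_of_pos ht _), hsplit,
    abs_of_pos (by positivity : (0:ℝ) < (1+t^ρ)^(k+1) * t^(k:ℝ))]
  rw [div_eq_mul_inv, mul_inv]
  have hb := hM (t^ρ) hu.le
  calc t^c * t^(k:ℝ) * (|(Pq ρ k).eval (t^ρ)| * (((1+t^ρ)^(k+1))⁻¹ * (t^(k:ℝ))⁻¹))
      ≤ t^c * t^(k:ℝ) * ((M * (1+t^ρ)^k) * (((1+t^ρ)^(k+1))⁻¹ * (t^(k:ℝ))⁻¹)) := by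
        apply mul_le_mul_of_nonneg_left _ (by positivity)
        apply mul_le_mul_of_nonneg_right hb (by positivity)
    _ = M * (t^c * (1+t^ρ)⁻¹) := by
        rw [pow_succ]
        field_simp

-- dominating function integrable, and its integral

lemma hdom_integrable {ρ : ℝ} (hρ : 0 < ρ) :
    IntegrableOn (fun t : ℝ => t^(ρ/2-1) * (1+t^ρ)⁻¹) (Ioi 0) volume := by
  have h2 : (ρ/2) ≠ 0 := by positivity
  have := (integrableOn_Ioi_comp_rpow_iff' (fun y : ℝ => (1+y^2)⁻¹) h2).mpr
    integrable_inv_one_add_sq.integrableOn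
  apply this.congr_fun _ measurableSet_Ioi
  intro x hx
  have hx' : (0:ℝ) < x := hx
  have : (x^(ρ/2))^(2:ℕ) = x^ρ := by
    rw [← Real.rpow_natCast (x^(ρ/2)) 2, ← Real.rpow_mul hx'.le]
    norm_num
  simp [smul_eq_mul, this]

lemma hdom_integral {ρ : ℝ} (hρ : 0 < ρ) :
    ∫ t in Ioi (0:ℝ), t^(ρ/2-1) * (1+t^ρ)⁻¹ = π/ρ := by
  have h2 : (0:ℝ) < ρ/2 := by positivity
  have key := integral_comp_rpow_Ioi_of_pos (g := fun y : ℝ => (1+y^2)⁻¹) h2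
  rw [integral_Ioi_inv_one_add_sq, arctan_zero, sub_zero] at key
  have : ∀ x ∈ Ioi (0:ℝ), (ρ/2 * x^(ρ/2-1)) • ((1+(x^(ρ/2))^2)⁻¹ : ℝ)
      = (ρ/2) * (x^(ρ/2-1) * (1+x^ρ)⁻¹) := by
    intro x hx
    have hx' : (0:ℝ) < x := hx
    have h3 : (x^(ρ/2))^(2:ℕ) = x^ρ := by
      rw [← Real.rpow_natCast (x^(ρ/2)) 2, ← Real.rpow_mul hx'.le]
      norm_num
    simp [smul_eq_mul, h3]; ring
  rw [setIntegral_congr_fun measurableSet_Ioi this, MeasureTheory.integral_const_mul] at key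
  have hρ' : ρ ≠ 0 := hρ.ne'
  field_simp at key ⊢
  linarith

lemma integrand_continuousOn (ρ : ℝ) (k : ℕ) (c : ℝ) :
    ContinuousOn (fun t : ℝ => t^c * Gf ρ k t) (Ioi 0) := by
  apply ContinuousOn.mul _ (Gf_continuousOn ρ k)
  intro t ht
  exact (Real.continuousAt_rpow_const t c (Or.inl (ne_of_gt ht))).continuousWithinAt

lemma integrand_integrable {ρ : ℝ} (hρ : 0 < ρ) (k : ℕ) :
    IntegrableOn (fun t : ℝ => t^(ρ/2+k-1) * Gf ρ k t) (Ioi 0) volume := by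
  obtain ⟨M, hM0, hM⟩ := Gf_bound ρ k
  have hmeas : AEStronglyMeasurable (fun t : ℝ => t^(ρ/2+k-1) * Gf ρ k t)
      (volume.restrict (Ioi 0)) := by
    have : (fun t : ℝ => t^(ρ/2+k-1) * Gf ρ k t) = fun t => t^(ρ/2+(k:ℝ)-1) * Gf ρ k t := rfl
    exact (integrand_continuousOn ρ k _).aestronglyMeasurable measurableSet_Ioi
  apply Integrable.mono' ((hdom_integrable hρ).const_mul M) hmeas
  rw [ae_restrict_iff' measurableSet_Ioi]
  filter_upwards with t
  intro ht
  have : ρ/2+(k:ℝ)-1 = (ρ/2-1) + k := by ring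
  rw [Real.norm_eq_abs, this]
  exact hM t ht (ρ/2-1)

lemma boundary_tendsto_atTop {ρ : ℝ} (hρ : 0 < ρ) (k : ℕ) :
    Tendsto (fun t : ℝ => t^(ρ/2+k) * Gf ρ k t) atTop (nhds 0) := by
  obtain ⟨M, hM0, hM⟩ := Gf_bound ρ k
  apply squeeze_zero_norm' (a := fun t : ℝ => M * t^(-(ρ/2)))
  · filter_upwards [eventually_gt_atTop (0:ℝ)] with t ht
    have h1 : |t^(ρ/2+k) * Gf ρ k t| ≤ M * (t^(ρ/2) * (1+t^ρ)⁻¹) := hM t ht (ρ/2)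
    have hu : (0:ℝ) < t^ρ := rpow_pos_of_pos ht ρ
    have h2 : t^(ρ/2) * (1+t^ρ)⁻¹ ≤ t^(-(ρ/2)) := by
      rw [show -(ρ/2) = ρ/2 - ρ by ring, Real.rpow_sub ht, div_eq_mul_inv]
      apply mul_le_mul_of_nonneg_left _ (rpow_pos_of_pos ht _).le
      exact inv_anti₀ hu (by linarith)
    calc ‖t^(ρ/2+k) * Gf ρ k t‖ ≤ M * (t^(ρ/2) * (1+t^ρ)⁻¹) := h1
      _ ≤ M * t^(-(ρ/2)) := mul_le_mul_of_nonneg_left h2 hM0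
  · rw [show (0:ℝ) = M * 0 by ring]
    exact (tendsto_rpow_neg_atTop (by positivity)).const_mul M

lemma boundary_tendsto_zero {ρ : ℝ} (hρ : 0 < ρ) (k : ℕ) (F : ℝ → ℝ)
    (hF : ∀ t : ℝ, t ≤ 0 → F t = 0) (hF' : ∀ t : ℝ, 0 < t → F t = t^(ρ/2+k) * Gf ρ k t) :
    Tendsto F (nhdsWithin 0 (Ici 0)) (nhds 0) := by
  obtain ⟨M, hM0, hM⟩ := Gf_bound ρ k
  apply squeeze_zero_norm' (a := fun t : ℝ => M * t^(ρ/2))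
  · rw [eventually_iff_exists_mem]
    refine ⟨Ici 0, self_mem_nhdsWithin, fun t ht => ?_⟩
    rcases eq_or_lt_of_le (Set.mem_Ici.mp ht) with h | h
    · rw [hF t (le_of_eq h.symm), ← h]
      simp [Real.zero_rpow (by positivity : ρ/2 ≠ 0)]
    · rw [hF' t h]
      have hu : (0:ℝ) < t^ρ := rpow_pos_of_pos h ρ
      calc ‖t^(ρ/2+k) * Gf ρ k t‖ ≤ M * (t^(ρ/2) * (1+t^ρ)⁻¹) := hM t h (ρ/2)
        _ ≤ M * (t^(ρ/2) * 1) := by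
            apply mul_le_mul_of_nonneg_left _ hM0
            apply mul_le_mul_of_nonneg_left _ (rpow_pos_of_pos h _).le
            rw [inv_le_one_iff₀]; right; linarith
        _ = M * t^(ρ/2) := by ring
  · have : Tendsto (fun t : ℝ => M * t^(ρ/2)) (nhds 0) (nhds (M * (0:ℝ)^(ρ/2))) := by
      exact ((Real.continuousAt_rpow_const 0 (ρ/2) (Or.inr (by positivity))).const_smul M)
    rw [Real.zero_rpow (by positivity : ρ/2 ≠ 0), mul_zero] at this
    exact tendsto_nhdsWithin_of_tendsto_nhds this

noncomputable def Jint (ρ : ℝ) (k : ℕ) : ℝ := ∫ t in Ioi (0:ℝ), t^(ρ/2+k-1) * Gf ρ k t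

lemma Jint_step {ρ : ℝ} (hρ : 0 < ρ) (k : ℕ) :
    Jint ρ (k+1) = -(ρ/2+k) * Jint ρ k := by
  set F : ℝ → ℝ := fun t => if t ≤ 0 then 0 else t^(ρ/2+k) * Gf ρ k t with hFdef
  set g : ℝ → ℝ := fun t =>
    (ρ/2+k) * (t^(ρ/2+k-1) * Gf ρ k t) + t^(ρ/2+(k+1:ℕ)-1) * Gf ρ (k+1) t with hgdef
  have hexp : ρ/2+((k+1:ℕ):ℝ)-1 = ρ/2+k := by push_cast; ring
  have hint1 : IntegrableOn (fun t : ℝ => t^(ρ/2+k-1) * Gf ρ k t) (Ioi 0) volume :=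
    integrand_integrable hρ k
  have hint2 : IntegrableOn (fun t : ℝ => t^(ρ/2+(k+1:ℕ)-1) * Gf ρ (k+1) t) (Ioi 0) volume :=
    integrand_integrable hρ (k+1)
  have hgint : IntegrableOn g (Ioi 0) volume := (hint1.const_mul _).add hint2
  have hderiv : ∀ x ∈ Ioi (0:ℝ), HasDerivAt F (g x) x := by
    intro x hx
    have hx' : (0:ℝ) < x := hx
    have h1 : HasDerivAt (fun t : ℝ => t^(ρ/2+k) * Gf ρ k t)
        ((ρ/2+k) * x^(ρ/2+k-1) * Gf ρ k x + x^(ρ/2+k) * Gf ρ (k+1) x) x :=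
      (Real.hasDerivAt_rpow_const (Or.inl hx'.ne')).mul (Gf_hasDerivAt ρ k hx')
    have heq : F =ᶠ[nhds x] (fun t : ℝ => t^(ρ/2+k) * Gf ρ k t) :=
      eventually_of_mem (Ioi_mem_nhds hx') (fun y hy => if_neg (not_le.mpr hy))
    have := h1.congr_of_eventuallyEq heq
    refine HasDerivAt.congr_deriv this ?_
    rw [hgdef]; simp only [hexp]; ring
  have hcont : ContinuousWithinAt F (Ici 0) 0 := by
    have h0 : F 0 = 0 := if_pos le_rfl
    unfold ContinuousWithinAt
    rw [h0]
    exact boundary_tendsto_zero hρ k F (fun t ht => if_pos ht)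
      (fun t ht => if_neg (not_le.mpr ht))
  have htop : Tendsto F atTop (nhds 0) := by
    apply (boundary_tendsto_atTop hρ k).congr'
    filter_upwards [eventually_gt_atTop (0:ℝ)] with t ht
    exact (if_neg (not_le.mpr ht)).symm
  have key := integral_Ioi_of_hasDerivAt_of_tendsto hcont hderiv hgint htop
  have hF0 : F 0 = 0 := if_pos le_rfl
  rw [hF0, sub_zero] at key
  have hsplit : ∫ x in Ioi (0:ℝ), g x =
      (ρ/2+k) * Jint ρ k + Jint ρ (k+1) := by
    rw [hgdef]
    rw [MeasureTheory.integral_add (hint1.const_mul _) hint2, MeasureTheory.integral_const_mul]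
    rfl
  rw [hsplit] at key
  linarith

lemma Jint_formula {ρ : ℝ} (hρ : 0 < ρ) (n : ℕ) :
    Jint ρ n = (-1)^n * (π/ρ) * ∏ j ∈ Finset.range n, (ρ/2+j) := by
  induction n with
  | zero =>
    simp only [pow_zero, Finset.range_zero, Finset.prod_empty, one_mul, mul_one]
    unfold Jint
    rw [← hdom_integral hρ]
    apply setIntegral_congr_fun measurableSet_Ioi
    intro t ht
    have ht' : (0:ℝ) < t := ht
    have hG : Gf ρ 0 t = (1+t^ρ)⁻¹ := by
      unfold Gf
      simp [Pq]
    simp only []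
    rw [hG]
    norm_num
  | succ n ih =>
    rw [Jint_step hρ n, ih, Finset.prod_range_succ, pow_succ]
    ring

theorem stmt_19 (n : ℕ) (hn : 1 ≤ n) (ρ : ℝ) (hρ : 1 < ρ) :
    (1 / (Nat.factorial (n - 1) : ℝ)) *
        ∫ t in Set.Ioi (0:ℝ), t ^ (ρ / 2 + n - 1) *
          ((-1 : ℝ) ^ n * iteratedDeriv n (fun x : ℝ => 1 / (1 + x ^ ρ)) t) =
      (π / 2) * ∏ k ∈ Finset.range (n - 1), (1 + ρ / (2 * ((k : ℝ) + 1))) := by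
  have hρ0 : (0:ℝ) < ρ := by linarith
  have hcong : (∫ t in Ioi (0:ℝ), t ^ (ρ / 2 + n - 1) *
      ((-1 : ℝ) ^ n * iteratedDeriv n (fun x : ℝ => 1 / (1 + x ^ ρ)) t))
      = (-1:ℝ)^n * Jint ρ n := by
    unfold Jint
    rw [← MeasureTheory.integral_const_mul]
    apply setIntegral_congr_fun measurableSet_Ioi
    intro t ht
    simp only []
    rw [Gf_eq_iteratedDeriv ρ n ht]
    ring
  rw [hcong, Jint_formula hρ0 n]
  obtain ⟨m, rfl⟩ : ∃ m, n = m + 1 := ⟨n-1, by omega⟩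
  simp only [Nat.add_sub_cancel]
  rw [Finset.prod_range_succ']
  have hprod : ∏ j ∈ Finset.range m, (ρ/2+((j+1:ℕ):ℝ)) =
      (Nat.factorial m : ℝ) * ∏ j ∈ Finset.range m, (1 + ρ / (2 * ((j : ℝ) + 1))) := by
    have h1 : ∀ j ∈ Finset.range m, (ρ/2+((j+1:ℕ):ℝ)) =
        ((j:ℝ)+1) * (1 + ρ / (2 * ((j : ℝ) + 1))) := by
      intro j _
      have : ((j:ℝ)+1) ≠ 0 := by positivity
      push_cast
      field_simp
      ring
    rw [Finset.prod_congr rfl h1, Finset.prod_mul_distrib]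
    congr 1
    have h2 : ((∏ x ∈ Finset.range m, (x+1) : ℕ) : ℝ) = ∏ x ∈ Finset.range m, ((x:ℝ)+1) := by
      push_cast; rfl
    rw [← h2, Finset.prod_range_add_one_eq_factorial]
  rw [hprod]
  have hsq : ((-1:ℝ)^(m+1)) * ((-1:ℝ)^(m+1)) = 1 := by
    rw [← mul_pow]; norm_num
  have hfac : (Nat.factorial m : ℝ) ≠ 0 := by
    exact_mod_cast (Nat.factorial_pos m).ne'
  have hρ' : ρ ≠ 0 := hρ0.ne'
  push_cast
  field_simp
  ring_nf
  have h3 : ∏ x ∈ Finset.range m, (2+(x:ℝ)*2+ρ) = ∏ x ∈ Finset.range m, (2*((x:ℝ)+1)+ρ) :=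
    Finset.prod_congr rfl (fun x _ => by ring)
  have h4 : (-1:ℝ)^(m*2) = 1 := by rw [mul_comm, pow_mul]; norm_num
  rw [h4]
  ring
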